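/- With d̄ as above and ρ̄ : ℂ[W̃] → ℍ̄ ⊗ C(V^∨) the diagonal embedding ρ̄(w̃) = t_{p(w̃)} ⊗ w̃, one has ρ̄(ℂ[W̃]) ⊂ ker(d̄). In particular d̄(t_{s_α} ⊗ α^∨) = 0 for every simple root α. -/

import Mathlib

open scoped TensorProduct

private lemma stmt18_reindex {M : Type*} [AddCommGroup M] [Module ℂ M]
    {V' : Type*} [AddCommGroup V'] [Module ℂ V'] {n : ℕ}
    (B : V' →ₗ[ℂ] V' →ₗ[ℂ] ℂ) (b : Module.Basis (Fin n) ℂ V')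
    (hrepr : ∀ v : V', ∑ j, B v (b j) • b j = v)
    (F : V' →ₗ[ℂ] V' →ₗ[ℂ] M) (A : V' →ₗ[ℂ] V')
    (hA : ∀ j k, (∑ i, B (A (b i)) (b j) * B (A (b i)) (b k))
        = if j = k then (1:ℂ) else 0) :
    ∑ i, F (A (b i)) (A (b i)) = ∑ i, F (b i) (b i) := by
  have step : ∀ i, F (A (b i)) (A (b i))
      = ∑ j, ∑ k, (B (A (b i)) (b j) * B (A (b i)) (b k)) • F (b j) (b k) := by
    intro i
    conv_lhs => rw [← hrepr (A (b i))]
    simp only [map_sum, map_smul, LinearMap.sum_apply, LinearMap.smul_apply,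
      Finset.smul_sum, smul_smul]
    rw [Finset.sum_comm]
    exact Finset.sum_congr rfl fun j _ => Finset.sum_congr rfl fun k _ => by
      rw [mul_comm]
  calc ∑ i, F (A (b i)) (A (b i))
      = ∑ i, ∑ j, ∑ k, (B (A (b i)) (b j) * B (A (b i)) (b k)) • F (b j) (b k) := by
        simp_rw [step]
    _ = ∑ j, ∑ k, ∑ i, (B (A (b i)) (b j) * B (A (b i)) (b k)) • F (b j) (b k) := by
        rw [Finset.sum_comm]
        exact Finset.sum_congr rfl fun j _ => Finset.sum_comm
    _ = ∑ j, ∑ k, (if j = k then (1:ℂ) else 0) • F (b j) (b k) := by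
        simp_rw [← Finset.sum_smul, hA]
    _ = ∑ j, F (b j) (b j) := by
        simp

/-- The diagonal embedding ρ̄(w̃) = t_{p(w̃)} ⊗ w̃ of ℂ[W̃] into
ℍ̄ ⊗ C(V^∨) lands in ker(d̄): every product of generators f_α (α a root, each a
scalar multiple of ι(α^∨)) is killed by d̄; in particular
d̄(t_{s_α} ⊗ α^∨) = 0 for every root α. -/
theorem stmt_18
    {V V' : Type} [AddCommGroup V] [Module ℂ V] [DecidableEq V]
    [AddCommGroup V'] [Module ℂ V']
    (P : V →ₗ[ℂ] V' →ₗ[ℂ] ℂ)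
    {W : Type} [Group W]
    (σ : W →* (V ≃ₗ[ℂ] V)) (σ' : W →* (V' ≃ₗ[ℂ] V'))
    (R : Finset V) (s : V → W) (cor : V → V')
    {Hb : Type} [Ring Hb] [Algebra ℂ Hb]
    (t : W → Hb) (x : V' →ₗ[ℂ] Hb)
    (ht1 : t 1 = 1) (htm : ∀ w₁ w₂ : W, t (w₁ * w₂) = t w₁ * t w₂)
    (hxc : ∀ ω₁ ω₂ : V', x ω₁ * x ω₂ = x ω₂ * x ω₁)
    (hcross : ∀ (w : W) (ω : V'), t w * x ω = x (σ' w ω) * t w)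
    (hspan : ∀ a : Hb, a ∈ Submodule.span ℂ
        {u : Hb | ∃ (w : W) (L : List V'), u = t w * (L.map x).prod})
    (hs2 : ∀ α ∈ R, s α * s α = 1)
    (hsV' : ∀ α ∈ R, ∀ ω : V', σ' (s α) ω = ω - P α ω • cor α)
    (B : V' →ₗ[ℂ] V' →ₗ[ℂ] ℂ) (hBsym : ∀ u v : V', B u v = B v u)
    (hBW : ∀ (w : W) (u v : V'), B (σ' w u) (σ' w v) = B u v)
    (hcorP : ∀ α ∈ R, ∀ ω : V', P α ω * B (cor α) (cor α) = 2 * B (cor α) ω)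
    {n : ℕ} (b : Module.Basis (Fin n) ℂ V')
    (hdual : ∀ i j, B (b i) (b j) = if i = j then 1 else 0)
    (QC : QuadraticForm ℂ V') (hQC : ∀ v : V', QC v = - B v v)
    (d : (Hb ⊗[ℂ] CliffordAlgebra QC) →ₗ[ℂ] (Hb ⊗[ℂ] CliffordAlgebra QC))
    (hd : ∀ (a : Hb) (L : List V'),
      d (a ⊗ₜ[ℂ] (L.map (CliffordAlgebra.ι QC)).prod)
        = ∑ i, (x (b i) * a) ⊗ₜ[ℂ]
            (CliffordAlgebra.ι QC (b i) * (L.map (CliffordAlgebra.ι QC)).prod)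
          - ((-1 : ℂ)^L.length) • ∑ i, (a * x (b i)) ⊗ₜ[ℂ]
            ((L.map (CliffordAlgebra.ι QC)).prod * CliffordAlgebra.ι QC (b i))) :
    (∀ L : List V, (∀ α ∈ L, α ∈ R) →
      d ((t ((L.map s).prod)) ⊗ₜ[ℂ]
          ((L.map (fun α => CliffordAlgebra.ι QC (cor α))).prod)) = 0)
    ∧ (∀ α ∈ R, d ((t (s α)) ⊗ₜ[ℂ] CliffordAlgebra.ι QC (cor α)) = 0) := by
  set ι := CliffordAlgebra.ι QC with hι
  -- coordinates via B
  have hcoord : ∀ (v : V') (j : Fin n), B v (b j) = b.repr v j := by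
    intro v j
    conv_lhs => rw [← b.sum_repr v]
    rw [map_sum, LinearMap.sum_apply]
    simp [hdual, Finset.sum_ite_eq']
  have hrepr : ∀ v : V', ∑ j, B v (b j) • b j = v := by
    intro v
    simp_rw [hcoord]
    exact b.sum_repr v
  -- σ' w inverse facts
  have hσinv : ∀ (w : W) (v : V'), σ' w⁻¹ (σ' w v) = v := by
    intro w v
    have : σ' w⁻¹ * σ' w = 1 := by rw [← map_mul, inv_mul_cancel, map_one]
    calc σ' w⁻¹ (σ' w v) = (σ' w⁻¹ * σ' w) v := rfl
      _ = v := by rw [this]; rfl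
  have hσinv' : ∀ (w : W) (v : V'), σ' w (σ' w⁻¹ v) = v := by
    intro w v
    have := hσinv w⁻¹ v
    rwa [inv_inv] at this
  -- orthogonality sums
  have hsum2 : ∀ u v : V', (∑ i, B (b i) u * B (b i) v) = B u v := by
    intro u v
    conv_rhs => rw [← hrepr u]
    rw [map_sum, LinearMap.sum_apply]
    refine (Finset.sum_congr rfl fun i _ => ?_).symm
    rw [map_smul, LinearMap.smul_apply, smul_eq_mul, hBsym u (b i)]
  have horth : ∀ (w : W) (j k : Fin n),
      (∑ i, B (σ' w (b i)) (b j) * B (σ' w (b i)) (b k))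
        = if j = k then (1:ℂ) else 0 := by
    intro w j k
    have h1 : ∀ (i : Fin n) (u : V'), B (σ' w (b i)) u = B (b i) (σ' w⁻¹ u) := by
      intro i u
      conv_lhs => rw [← hσinv' w u, hBW w (b i) (σ' w⁻¹ u)]
    simp_rw [h1]
    rw [hsum2, hBW w⁻¹, hdual]
  -- polar form
  have hpolar : ∀ u v : V', QuadraticMap.polar (⇑QC) u v = -2 * B u v := by
    intro u v
    rw [QuadraticMap.polar]
    simp only [hQC, map_add, LinearMap.add_apply]
    rw [hBsym v u]
    ring
  have hBneg : ∀ u v : V', ι u * ι v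
      = algebraMap ℂ (CliffordAlgebra QC) (-2 * B u v) - ι v * ι u := by
    intro u v
    rw [eq_sub_iff_add_eq, CliffordAlgebra.ι_mul_ι_add_swap, hpolar]
  -- key reflection identity
  have key : ∀ α ∈ R, ∀ v : V',
      ι (cor α) * ι v = -(ι (σ' (s α) v) * ι (cor α)) := by
    intro α hα v
    rw [hBneg (cor α) v, hsV' α hα v, map_sub, map_smul, sub_mul, smul_mul_assoc,
      hι, CliffordAlgebra.ι_sq_scalar, neg_sub]
    congr 1
    rw [hQC, Algebra.algebraMap_eq_smul_one, Algebra.algebraMap_eq_smul_one, smul_smul]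
    congr 1
    linear_combination hcorP α hα v
  -- commuting a vector past a product of root generators
  have hcomm : ∀ (L : List V), (∀ α ∈ L, α ∈ R) → ∀ v : V',
      (L.map (fun α => ι (cor α))).prod * ι v
        = ((-1:ℂ)^L.length) • (ι (σ' ((L.map s).prod) v)
            * (L.map (fun α => ι (cor α))).prod) := by
    intro L
    induction L with
    | nil => intro _ v; simp
    | cons α L ih =>
      intro hmem v
      have hα := hmem α (List.mem_cons_self (a := α) (l := L))
      have hL : ∀ β ∈ L, β ∈ R := fun β hβ => hmem β (List.mem_cons_of_mem _ hβ)
      simp only [List.map_cons, List.prod_cons, List.length_cons]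
      rw [mul_assoc, ih hL v, mul_smul_comm, ← mul_assoc, key α hα, neg_mul,
        mul_assoc]
      have hval : σ' (s α) (σ' (List.prod (L.map s)) v)
          = σ' ((s α * List.prod (L.map s))) v := by
        rw [map_mul]; rfl
      rw [hval, smul_neg, ← neg_smul, pow_succ]
      ring_nf
  -- main statement
  have main : ∀ L : List V, (∀ α ∈ L, α ∈ R) →
      d ((t ((L.map s).prod)) ⊗ₜ[ℂ] ((L.map (fun α => ι (cor α))).prod)) = 0 := by
    intro L hL
    set w := (L.map s).prod with hw
    set a := t w with ha
    set c := (L.map (fun α => ι (cor α))).prod with hc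
    have hdmain := hd a (L.map cor)
    rw [List.map_map] at hdmain
    have hfun : (ι ∘ cor) = fun α => ι (cor α) := rfl
    rw [hfun, ← hc, List.length_map] at hdmain
    rw [hdmain, sub_eq_zero]
    -- rewrite the right-hand sum
    have hterm : ∀ i, (a * x (b i)) ⊗ₜ[ℂ] (c * ι (b i))
        = ((-1:ℂ)^L.length) • ((x (σ' w (b i)) * a) ⊗ₜ[ℂ] (ι (σ' w (b i)) * c)) := by
      intro i
      rw [ha, hcross w (b i), hc, hcomm L hL (b i), ← hw]
      rw [TensorProduct.tmul_smul]
    simp_rw [hterm, ← Finset.smul_sum, smul_smul, ← pow_add]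
    have hpow : ((-1:ℂ)) ^ (L.length + L.length) = 1 := by
      rw [← two_mul, pow_mul]
      norm_num
    rw [hpow, one_smul]
    -- reindexing
    let F : V' →ₗ[ℂ] V' →ₗ[ℂ] (Hb ⊗[ℂ] CliffordAlgebra QC) :=
      ((TensorProduct.mk ℂ Hb (CliffordAlgebra QC)).comp
          ((LinearMap.mulRight ℂ a).comp x)).compl₂
        ((LinearMap.mulRight ℂ c).comp ι)
    have hF : ∀ u v : V', F u v = (x u * a) ⊗ₜ[ℂ] (ι v * c) := fun u v => rfl
    have := stmt18_reindex B b hrepr F (σ' w).toLinearMap (by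
      intro j k
      simpa using horth w j k)
    simpa [hF] using this.symm
  refine ⟨main, fun α hα => ?_⟩
  have h := main [α] (by simpa using hα)
  simpa using h
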